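/- Consider a multi-block SDP with data: a finite index set B of blocks with sizes n_β, symmetric matrices C_β ∈ S^{n_β} and A_{i,β} ∈ S^{n_β} for i ∈ [m], and b ∈ ℝ^m. Suppose X̂ = (X̂_β)_{β ∈ B} is a tuple of positive semidefinite matrices satisfying the linear constraints Σ_{β ∈ B} ⟨A_{i,β}, X̂_β⟩ = b_i for all i ∈ [m], and suppose tr(X̂_β) ≤ R_β for each β ∈ B with R_β ≥ 0. Then for every y ∈ ℝ^m: Σ_{β ∈ B} ⟨C_β, X̂_β⟩ ≥ ⟨b, y⟩ + Σ_{β ∈ B} R_β · min{ 0, λ_min( C_β − Σ_{i=1}^m y_i A_{i,β} ) }. -/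

import Mathlib

open Matrix


lemma psd_trace_nonneg {k : ℕ} {P : Matrix (Fin k) (Fin k) ℝ} (hP : P.PosSemidef) :
    0 ≤ P.trace := by
  rw [Matrix.trace]
  exact Finset.sum_nonneg fun i _ => by
    exact hP.diag_nonneg

lemma trace_mul_psd_nonneg {k : ℕ} {S X : Matrix (Fin k) (Fin k) ℝ}
    (hS : S.PosSemidef) (hX : X.PosSemidef) : 0 ≤ (S * X).trace := by
  obtain ⟨Bm, rfl⟩ : ∃ Bm : Matrix (Fin k) (Fin k) ℝ, X = Bmᴴ * Bm := by
    open scoped MatrixOrder in exact CStarAlgebra.nonneg_iff_eq_star_mul_self.mp hX.nonneg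
  rw [← mul_assoc, trace_mul_cycle]
  exact psd_trace_nonneg (hS.mul_mul_conjTranspose_same Bm)

lemma shift_psd {k : ℕ} {S : Matrix (Fin k) (Fin k) ℝ} (hS : S.IsHermitian)
    {c : ℝ} (hc : ∀ j, c ≤ hS.eigenvalues j) : (S - c • 1).PosSemidef := by
  have h0 : S - c • 1 =
      (hS.eigenvectorUnitary : Matrix (Fin k) (Fin k) ℝ) *
        (diagonal (fun j => hS.eigenvalues j - c)) *
        (star (hS.eigenvectorUnitary : Matrix (Fin k) (Fin k) ℝ)) := by
    have hu : (hS.eigenvectorUnitary : Matrix (Fin k) (Fin k) ℝ) *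
        (star (hS.eigenvectorUnitary : Matrix (Fin k) (Fin k) ℝ)) = 1 :=
      Matrix.mem_unitaryGroup_iff.mp hS.eigenvectorUnitary.2
    have hd : (diagonal (fun j => hS.eigenvalues j - c)) =
        diagonal ((RCLike.ofReal : ℝ → ℝ) ∘ hS.eigenvalues) - c • 1 := by
      ext i j
      by_cases h : i = j <;>
        simp [Matrix.diagonal_apply, h, Matrix.one_apply, Matrix.smul_apply]
    calc S - c • 1
        = (hS.eigenvectorUnitary : Matrix (Fin k) (Fin k) ℝ) *
            (diagonal ((RCLike.ofReal : ℝ → ℝ) ∘ hS.eigenvalues)) *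
            (star (hS.eigenvectorUnitary : Matrix (Fin k) (Fin k) ℝ)) - c • 1 := by
          conv_lhs => rw [hS.spectral_theorem]
          rfl
      _ = _ := by
          rw [hd, mul_sub, sub_mul]
          congr 1
          rw [Matrix.mul_smul, mul_one, Matrix.smul_mul, hu]
  rw [h0]
  exact (posSemidef_diagonal_iff.mpr fun j => sub_nonneg.mpr (hc j)).mul_mul_conjTranspose_same _

/-- **Refined lower bound for a multi-block SDP.**
If the PSD tuple `X̂ = (X̂_β)` satisfies the linear constraints `Σ_β ⟨A_{i,β}, X̂_β⟩ = b_i`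
and trace bounds `tr(X̂_β) ≤ R_β` with `R_β ≥ 0`, then for every `y ∈ ℝ^m`,
`Σ_β ⟨C_β, X̂_β⟩ ≥ ⟨b, y⟩ + Σ_β R_β · min{0, λ_min(C_β − Σ_i y_i A_{i,β})}`. -/
theorem stmt_3 (B : Type*) [Fintype B] (n : B → ℕ) (m : ℕ)
    (C : ∀ β, Matrix (Fin (n β)) (Fin (n β)) ℝ)
    (A : Fin m → ∀ β, Matrix (Fin (n β)) (Fin (n β)) ℝ)
    (b : Fin m → ℝ) (R : B → ℝ)
    (Xh : ∀ β, Matrix (Fin (n β)) (Fin (n β)) ℝ)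
    (hC : ∀ β, (C β).IsHermitian) (hA : ∀ i β, (A i β).IsHermitian)
    (hX : ∀ β, (Xh β).PosSemidef)
    (hlin : ∀ i, ∑ β, ((A i β)ᵀ * Xh β).trace = b i)
    (hR : ∀ β, 0 ≤ R β) (htr : ∀ β, (Xh β).trace ≤ R β)
    (y : Fin m → ℝ)
    (hH : ∀ β, (C β - ∑ i, y i • A i β).IsHermitian) :
    ∑ β, ((C β)ᵀ * Xh β).trace ≥
      (∑ i, b i * y i) + ∑ β, R β * min 0 (⨅ j, (hH β).eigenvalues j) := by
  set S : ∀ β, Matrix (Fin (n β)) (Fin (n β)) ℝ := fun β => C β - ∑ i, y i • A i β with hSdef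
  set μ : B → ℝ := fun β => min 0 (⨅ j, (hH β).eigenvalues j) with hμdef
  -- per-block key inequality
  have key : ∀ β, R β * μ β ≤ (S β * Xh β).trace := by
    intro β
    have hμle : ∀ j, μ β ≤ (hH β).eigenvalues j := fun j =>
      (min_le_right _ _).trans (ciInf_le (Set.Finite.bddBelow (Set.finite_range _)) j)
    have hpsd : (S β - μ β • 1).PosSemidef := shift_psd (hH β) hμle
    have h0 : 0 ≤ ((S β - μ β • 1) * Xh β).trace := trace_mul_psd_nonneg hpsd (hX β)
    have h1 : ((S β - μ β • 1) * Xh β).trace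
        = (S β * Xh β).trace - μ β * (Xh β).trace := by
      rw [Matrix.sub_mul, Matrix.smul_mul, one_mul, trace_sub, trace_smul, smul_eq_mul]
    have hμ0 : μ β ≤ 0 := min_le_left _ _
    nlinarith [htr β, h0, h1]
  -- trace decomposition
  have hdec : ∀ β, ((C β)ᵀ * Xh β).trace
      = (S β * Xh β).trace + ∑ i, y i * ((A i β)ᵀ * Xh β).trace := by
    intro β
    have hCt : (C β)ᵀ = C β := (hC β).eq
    have hAt : ∀ i, (A i β)ᵀ = A i β := fun i => (hA i β).eq
    simp only [hCt, hAt, hSdef, Matrix.sub_mul, trace_sub, Finset.sum_mul,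
      Matrix.smul_mul, trace_sum, trace_smul, smul_eq_mul]
    ring
  calc ∑ β, ((C β)ᵀ * Xh β).trace
      = ∑ β, (S β * Xh β).trace + ∑ i, y i * b i := by
        simp only [hdec, Finset.sum_add_distrib]
        congr 1
        rw [Finset.sum_comm]
        exact Finset.sum_congr rfl fun i _ => by rw [← Finset.mul_sum, hlin i]
    _ ≥ (∑ i, b i * y i) + ∑ β, R β * μ β := by
        have h2 : ∑ β, R β * μ β ≤ ∑ β, (S β * Xh β).trace :=
          Finset.sum_le_sum fun β _ => key β
        have h3 : ∑ i, y i * b i = ∑ i, b i * y i :=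
          Finset.sum_congr rfl fun i _ => mul_comm _ _
        linarith
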